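/- Let Γ be an exponent-canceling group of rank r with generators γ_1, …, γ_r (the images of the free generators of the presentation), and let A be an abelian topological group. Then the evaluation map Hom(Γ, A) → A^r sending a homomorphism f to (f(γ_1), …, f(γ_r)) is a homeomorphism, where Hom(Γ, A) carries the topology of pointwise convergence. -/

import Mathlib

/-- The representation space `Hom(Γ, A)`: group homomorphisms `Γ → A`, topologized by
pointwise convergence (as a subspace of `Γ → A`). -/
abbrev HomSpace (Γ A : Type*) [Group Γ] [Group A] [TopologicalSpace A] : Type _ :=
  {f : Γ → A // ∀ a b, f (a * b) = f a * f b}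

private lemma cont_lift {r : ℕ} {A : Type} [CommGroup A] [TopologicalSpace A]
    [IsTopologicalGroup A] (w : FreeGroup (Fin r)) :
    Continuous (fun v : Fin r → A => FreeGroup.lift v w) := by
  induction w using FreeGroup.induction_on with
  | C1 => simpa using (continuous_const : Continuous fun _ : Fin r → A => (1 : A))
  | of i =>
      simpa [show (pure i : FreeGroup (Fin r)) = FreeGroup.of i from rfl, FreeGroup.lift_apply_of]
        using continuous_apply (A := fun _ => A) i
  | inv_of i ih => simp only [map_inv]; exact ih.inv
  | mul x y ihx ihy => simp only [map_mul]; exact ihx.mul ihy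

/-- Let `Γ` be an exponent-canceling group of rank `r`, presented as
`F_r/⟨⟨R⟩⟩` with every relator in `R` lying in the commutator subgroup of the free group
`F_r`, with generators the images of the free generators.  For any abelian topological
group `A`, the evaluation map `Hom(Γ, A) → A^r`, `f ↦ (f(γ₁), …, f(γ_r))`, is a
homeomorphism. -/
theorem stmt17 (r : ℕ) (R : Set (FreeGroup (Fin r)))
    (hR : ∀ w ∈ R, w ∈ commutator (FreeGroup (Fin r)))
    (A : Type) [CommGroup A] [TopologicalSpace A] [IsTopologicalGroup A] :
    IsHomeomorph
      (fun (f : HomSpace (PresentedGroup R) A) (k : Fin r) => f.1 (PresentedGroup.of k)) := by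
  have hker : ∀ v : Fin r → A, ∀ w ∈ R, FreeGroup.lift v w = 1 := fun v w hw =>
    Abelianization.commutator_subset_ker (FreeGroup.lift v) (hR w hw)
  -- the inverse map
  let g : (Fin r → A) → HomSpace (PresentedGroup R) A := fun v =>
    ⟨fun x => PresentedGroup.toGroup (hker v) x, fun a b => map_mul _ a b⟩
  have hgf : ∀ f : HomSpace (PresentedGroup R) A,
      g (fun k => f.1 (PresentedGroup.of k)) = f := by
    intro f
    apply Subtype.ext
    funext x
    show PresentedGroup.toGroup _ x = f.1 x
    have hone : f.1 1 = 1 := by have := f.2 1 1; simpa using this.symm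
    let F : PresentedGroup R →* A := ⟨⟨f.1, hone⟩, f.2⟩
    exact (PresentedGroup.toGroup.unique (hker _) F (fun k => rfl)).symm
  have hfg : ∀ v : Fin r → A, (fun k => (g v).1 (PresentedGroup.of k)) = v := by
    intro v; funext k; exact PresentedGroup.toGroup.of (hker v)
  let e : HomSpace (PresentedGroup R) A ≃ₜ (Fin r → A) :=
    { toFun := fun f k => f.1 (PresentedGroup.of k)
      invFun := g
      left_inv := hgf
      right_inv := hfg
      continuous_toFun := by
        show Continuous fun f : HomSpace (PresentedGroup R) A => fun k => f.1 (PresentedGroup.of k)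
        apply continuous_pi
        intro k
        exact (continuous_apply _).comp continuous_subtype_val
      continuous_invFun := by
        show Continuous g
        apply Continuous.subtype_mk
        apply continuous_pi
        intro x
        induction x using QuotientGroup.induction_on with
        | H w => exact cont_lift w }
  exact e.isHomeomorph
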